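/- (Result 2) Let (u*, v*, w*) be an optimal solution of the dual D(D) and set τ = v* y_k + w*. If −u* x_k + v* y_k + w* > 0, then τ M > 1, the point (M u*, v*/τ, w*/τ) is feasible for Problem (2), attains objective value 1 there, and hence e_k^* = 1. -/

import Mathlib

open Finset

/-- Feasibility for the primal problem P(S) (inputs scaled by M at DMU k). -/
def PFeas {ι : Type*} [DecidableEq ι] {m n : ℕ} (S : Finset ι) (k : ι) (M : ℝ)
    (x : ι → Fin m → ℝ) (y : ι → Fin n → ℝ) (θ : ℝ) (lam : ι → ℝ) : Prop :=
  (∀ i, lam k * (M * x k i) + ∑ r ∈ S.erase k, lam r * x r i ≤ θ * (M * x k i)) ∧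
  (∀ j, y k j ≤ lam k * y k j + ∑ r ∈ S.erase k, lam r * y r j) ∧
  (∑ r ∈ S, lam r = 1) ∧
  (∀ r ∈ S, 0 ≤ lam r)

/-- Feasibility for the dual problem D(D). -/
def DFeas {ι : Type*} [DecidableEq ι] {m n : ℕ} (D : Finset ι) (k : ι) (M : ℝ)
    (x : ι → Fin m → ℝ) (y : ι → Fin n → ℝ)
    (u : Fin m → ℝ) (v : Fin n → ℝ) (w : ℝ) : Prop :=
  (∑ i, u i * (M * x k i)) = 1 ∧
  (∀ r ∈ D.erase k, -(∑ i, u i * x r i) + (∑ j, v j * y r j) + w ≤ 0) ∧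
  (-(∑ i, u i * (M * x k i)) + (∑ j, v j * y k j) + w ≤ 0) ∧
  (∀ i, 0 ≤ u i) ∧ (∀ j, 0 ≤ v j)

/-- Feasibility for the M = 1 dual Problem (2). -/
def Feas2 {ι : Type*} {m n : ℕ} (D : Finset ι) (k : ι)
    (x : ι → Fin m → ℝ) (y : ι → Fin n → ℝ)
    (u : Fin m → ℝ) (v : Fin n → ℝ) (w : ℝ) : Prop :=
  (∑ i, u i * x k i) = 1 ∧
  (∀ r ∈ D, -(∑ i, u i * x r i) + (∑ j, v j * y r j) + w ≤ 0) ∧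
  (∀ i, 0 ≤ u i) ∧ (∀ j, 0 ≤ v j)

/-- Feasibility for the standard primal Problem (1). -/
def Feas1 {ι : Type*} {m n : ℕ} (D : Finset ι) (k : ι)
    (x : ι → Fin m → ℝ) (y : ι → Fin n → ℝ) (θ : ℝ) (lam : ι → ℝ) : Prop :=
  (∀ i, ∑ r ∈ D, lam r * x r i ≤ θ * x k i) ∧
  (∀ j, y k j ≤ ∑ r ∈ D, lam r * y r j) ∧
  (∑ r ∈ D, lam r = 1) ∧
  (∀ r ∈ D, 0 ≤ lam r)


theorem stmt6 {ι : Type*} [DecidableEq ι] {m n : ℕ} (D : Finset ι) (k : ι) (hk : k ∈ D)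
    (M : ℝ) (hM : 1 ≤ M) (x : ι → Fin m → ℝ) (y : ι → Fin n → ℝ)
    (hx : ∀ r ∈ D, ∀ i, 0 < x r i)
    (u : Fin m → ℝ) (v : Fin n → ℝ) (w : ℝ)
    (hfeas : DFeas D k M x y u v w)
    (hopt : IsGreatest {c : ℝ | ∃ u' : Fin m → ℝ, ∃ v' : Fin n → ℝ, ∃ w' : ℝ,
        DFeas D k M x y u' v' w' ∧ c = (∑ j, v' j * y k j) + w'}
      ((∑ j, v j * y k j) + w))
    (τ : ℝ) (hτ : τ = (∑ j, v j * y k j) + w)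
    (hcond : 0 < -(∑ i, u i * x k i) + (∑ j, v j * y k j) + w)
    (e : ℝ)
    (he : IsGreatest {c : ℝ | ∃ u' : Fin m → ℝ, ∃ v' : Fin n → ℝ, ∃ w' : ℝ,
        Feas2 D k x y u' v' w' ∧ c = (∑ j, v' j * y k j) + w'} e) :
    1 < τ * M ∧
    Feas2 D k x y (fun i => M * u i) (fun j => v j / τ) (w / τ) ∧
    (∑ j, (v j / τ) * y k j) + w / τ = 1 ∧
    e = 1 := by

  obtain ⟨h1, h2, h3, hu, hv⟩ := hfeas
  have hMpos : (0:ℝ) < M := lt_of_lt_of_le one_pos hM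
  have hsum : M * (∑ i, u i * x k i) = 1 := by
    rw [← h1, Finset.mul_sum]; congr 1; ext i; ring
  have hxkpos : 0 < ∑ i, u i * x k i := by
    nlinarith [hsum, hMpos]
  have hτgt : ∑ i, u i * x k i < τ := by rw [hτ]; linarith
  have hτpos : 0 < τ := lt_trans hxkpos hτgt
  have hτM : 1 < τ * M := by nlinarith
  have hvy : ∀ r, ∑ j, v j / τ * y r j = (∑ j, v j * y r j) / τ := by
    intro r; rw [Finset.sum_div]; congr 1; ext j; ring
  have hMx : ∀ r, ∑ i, (M * u i) * x r i = M * ∑ i, u i * x r i := by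
    intro r; rw [Finset.mul_sum]; congr 1; ext i; ring
  have hfeas2 : Feas2 D k x y (fun i => M * u i) (fun j => v j / τ) (w / τ) := by
    refine ⟨by simpa using (hMx k).trans hsum, ?_, fun i => mul_nonneg hMpos.le (hu i), fun j => div_nonneg (hv j) hτpos.le⟩
    intro r hr
    simp only [hvy, hMx]
    rcases eq_or_ne r k with rfl | hne
    · have : (∑ j, v j * y r j) / τ + w / τ = 1 := by
        rw [← add_div, ← hτ, div_self (ne_of_gt hτpos)]
      rw [hsum] at *
      linarith [this]
    · have hA : 0 ≤ ∑ i, u i * x r i :=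
        Finset.sum_nonneg fun i _ => mul_nonneg (hu i) (le_of_lt (hx r hr i))
      have hB := h2 r (Finset.mem_erase.mpr ⟨hne, hr⟩)
      have key : (∑ j, v j * y r j) + w ≤ M * (∑ i, u i * x r i) * τ := by
        nlinarith
      have hd : (∑ j, v j * y r j) / τ + w / τ = ((∑ j, v j * y r j) + w) / τ := by ring
      have := (div_le_iff₀ hτpos).mpr key
      linarith
  have hobj : (∑ j, (v j / τ) * y k j) + w / τ = 1 := by
    rw [hvy, ← add_div, ← hτ, div_self (ne_of_gt hτpos)]
  refine ⟨hτM, hfeas2, hobj, ?_⟩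
  have h1e : (1:ℝ) ≤ e := he.2 ⟨_, _, _, hfeas2, hobj.symm⟩
  obtain ⟨u', v', w', ⟨g1, g2, gu, gv⟩, geq⟩ := he.1
  have := g2 k hk
  have : e ≤ 1 := by rw [geq]; linarith [g1]
  linarith
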